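/- arXiv:1303.5472 — 7 statements merged into one kernel-verified Lean document; each statement's English description precedes it below -/
import Mathlib

section
/- Let X, Y ∈ Mₙ(ℂ) and suppose there exists a nonzero vector p ∈ ℂⁿ with X·p = 0 and Y·p = 0. Then Y·adj(X) = 0, where adj(X) denotes the adjugate (matrix of cofactors, transposed) of X. -/
open Matrix

/-- If a nonzero vector `p` satisfies `X·p = 0` and `Y·p = 0`, then `Y·adj(X) = 0`,
where `adj X` is the adjugate (transposed matrix of cofactors) of `X`. -/
theorem mul_adjugate_eq_zero_of_common_kernel {n : ℕ}
    (X Y : Matrix (Fin n) (Fin n) ℂ) (p : Fin n → ℂ) (hp : p ≠ 0)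
    (hX : X.mulVec p = 0) (hY : Y.mulVec p = 0) :
    Y * X.adjugate = 0 := by
  have hdet : X.det = 0 := by
    rw [← Matrix.exists_mulVec_eq_zero_iff]
    exact ⟨p, hp, hX⟩
  have hXadj : X * X.adjugate = 0 := by
    rw [Matrix.mul_adjugate, hdet, zero_smul]
  by_cases hker : ∀ v : Fin n → ℂ, X.mulVec v = 0 → ∃ c : ℂ, v = c • p
  · -- every kernel vector is a multiple of p
    ext i j
    have hcol : X.mulVec (fun k => X.adjugate k j) = 0 := by
      ext k
      have := congrFun (congrFun hXadj k) j
      simpa [Matrix.mul_apply, Matrix.mulVec, dotProduct] using this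
    obtain ⟨c, hc⟩ := hker _ hcol
    have : (Y * X.adjugate) i j = (Y.mulVec fun k => X.adjugate k j) i := by
      simp [Matrix.mul_apply, Matrix.mulVec, dotProduct]
    rw [Matrix.zero_apply, this, hc]
    have : Y.mulVec (c • p) = 0 := by
      rw [Matrix.mulVec_smul, hY, smul_zero]
    rw [this, Pi.zero_apply]
  · -- there is a kernel vector not a multiple of p; then adjugate X = 0
    push_neg at hker
    obtain ⟨q, hq, hqp⟩ := hker
    have hadj : X.adjugate = 0 := by
      ext i j
      rw [Matrix.adjugate_apply, Matrix.zero_apply, ← Matrix.exists_mulVec_eq_zero_iff]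
      by_cases hpi : p i = 0
      · refine ⟨p, hp, ?_⟩
        ext k
        by_cases hk : k = j
        · subst hk
          simp [Matrix.mulVec, dotProduct, Matrix.updateRow_self,
            Pi.single_apply, hpi]
        · have := congrFun hX k
          simpa [Matrix.mulVec, dotProduct, Matrix.updateRow_ne hk] using this
      · refine ⟨q i • p - p i • q, ?_, ?_⟩
        · intro h
          apply hqp ((q i) / (p i))
          have : q i • p = p i • q := by
            rwa [sub_eq_zero] at h
          ext k
          have := congrFun this k
          simp only [Pi.smul_apply, smul_eq_mul] at this ⊢
          field_simp
          linear_combination -this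
        · have hXv : X.mulVec (q i • p - p i • q) = 0 := by
            rw [Matrix.mulVec_sub, Matrix.mulVec_smul, Matrix.mulVec_smul, hX, hq,
              smul_zero, smul_zero, sub_zero]
          ext k
          by_cases hk : k = j
          · subst hk
            simp [Matrix.mulVec, dotProduct, Matrix.updateRow_self,
              Pi.single_apply, mul_comm]
          · have := congrFun hXv k
            simpa [Matrix.mulVec, dotProduct, Matrix.updateRow_ne hk] using this
    rw [hadj, Matrix.mul_zero]
end

section
/- Let λ₀ ∈ ℂ, let J ≤ K be positive integers and let L be a natural number with L < J. Let U, W, M₁, M₂, D : ℂ → Mₙ(ℂ) be matrix-valued functions analytic at λ₀ with D(λ₀) invertible, and let α, β ∈ ℂ. Suppose the function λ ↦ α·U(λ) + β·W(λ) vanishes at λ₀ together with its Taylor coefficients up to order L (i.e. it vanishes to order at least L+1 at λ₀). Then the function λ ↦ α·((λ−λ₀)ᴶ·M₁(λ) + D(λ)·U(λ)·D(λ)⁻¹) + β·((λ−λ₀)ᴷ·M₂(λ) + D(λ)·W(λ)·D(λ)⁻¹) also vanishes to order at least L+1 at λ₀. (This is the statement that the linear constraints α·uₘ + β·wₘ =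 0, m = 0,…,L, on the Taylor coefficients of U and W are preserved by the Darboux–Bäcklund transformation.) -/
attribute [local instance] Matrix.normedAddCommGroup Matrix.normedSpace

open Matrix Filter

section Aux

variable {n : ℕ}

private lemma analyticAt_entry {f : ℂ → Matrix (Fin n) (Fin n) ℂ} {x : ℂ}
    (hf : AnalyticAt ℂ f x) (i j : Fin n) :
    AnalyticAt ℂ (fun z => f z i j) x := by
  have h1 : AnalyticAt ℂ (fun z => f z i) x := (analyticAt_pi_iff.mp hf) i
  exact (analyticAt_pi_iff.mp h1) j

private lemma analyticAt_of_entries {f : ℂ → Matrix (Fin n) (Fin n) ℂ} {x : ℂ}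
    (hf : ∀ i j, AnalyticAt ℂ (fun z => f z i j) x) :
    AnalyticAt ℂ f x := by
  apply AnalyticAt.pi
  intro i
  exact AnalyticAt.pi fun j => hf i j

private lemma analyticAt_matmul {f g : ℂ → Matrix (Fin n) (Fin n) ℂ} {x : ℂ}
    (hf : AnalyticAt ℂ f x) (hg : AnalyticAt ℂ g x) :
    AnalyticAt ℂ (fun z => f z * g z) x := by
  apply analyticAt_of_entries
  intro i j
  simp only [Matrix.mul_apply]
  exact Finset.analyticAt_fun_sum _ fun k _ =>
    (analyticAt_entry hf i k).mul (analyticAt_entry hg k j)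

private lemma analyticAt_det {f : ℂ → Matrix (Fin n) (Fin n) ℂ} {x : ℂ}
    (hf : AnalyticAt ℂ f x) :
    AnalyticAt ℂ (fun z => (f z).det) x := by
  simp only [Matrix.det_apply']
  exact Finset.analyticAt_fun_sum _ fun σ _ =>
    (analyticAt_const).mul <|
      Finset.analyticAt_fun_prod _ fun i _ => analyticAt_entry hf (σ i) i

private lemma analyticAt_adjugate {f : ℂ → Matrix (Fin n) (Fin n) ℂ} {x : ℂ}
    (hf : AnalyticAt ℂ f x) :
    AnalyticAt ℂ (fun z => (f z).adjugate) x := by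
  apply analyticAt_of_entries
  intro i j
  simp only [Matrix.adjugate_apply]
  apply analyticAt_det
  apply analyticAt_of_entries
  intro i' j'
  by_cases h : i' = j
  · simp only [Matrix.updateRow_apply, if_pos h]
    exact analyticAt_const
  · simp only [Matrix.updateRow_apply, h, if_false]
    exact analyticAt_entry hf i' j'

private lemma analyticAt_matinv {f : ℂ → Matrix (Fin n) (Fin n) ℂ} {x : ℂ}
    (hf : AnalyticAt ℂ f x) (hx : IsUnit (f x)) :
    AnalyticAt ℂ (fun z => (f z)⁻¹) x := by
  have hdet : AnalyticAt ℂ (fun z => (f z).det) x := analyticAt_det hf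
  have hdet0 : (f x).det ≠ 0 := by
    have := (Matrix.isUnit_iff_isUnit_det _).mp hx
    exact IsUnit.ne_zero this
  have : AnalyticAt ℂ (fun z => ((f z).det)⁻¹ • (f z).adjugate) x :=
    (hdet.inv hdet0).smul (analyticAt_adjugate hf)
  refine this.congr ?_
  filter_upwards with z
  rw [Matrix.inv_def, Ring.inverse_eq_inv']

end Aux

/-- **Linear invariants of the Darboux–Bäcklund transformation.** If `α·U + β·W` vanishes
to order at least `L+1` at `λ₀` (`L < J ≤ K`), with `U, W, M₁, M₂, D` analytic at `λ₀` and
`D λ₀` invertible, then `α·((λ−λ₀)ᴶM₁ + D·U·D⁻¹) + β·((λ−λ₀)ᴷM₂ + D·W·D⁻¹)` also vanishes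
to order at least `L+1` at `λ₀`. -/
theorem linear_invariants_preserved {n : ℕ}
    (lam₀ : ℂ) (J K L : ℕ) (hJ : 0 < J) (hJK : J ≤ K) (hL : L < J)
    (U W M₁ M₂ D : ℂ → Matrix (Fin n) (Fin n) ℂ)
    (hU : AnalyticAt ℂ U lam₀) (hW : AnalyticAt ℂ W lam₀)
    (hM₁ : AnalyticAt ℂ M₁ lam₀) (hM₂ : AnalyticAt ℂ M₂ lam₀)
    (hD : AnalyticAt ℂ D lam₀) (hDinv : IsUnit (D lam₀))
    (a b : ℂ)
    (hvan : ∃ g : ℂ → Matrix (Fin n) (Fin n) ℂ, AnalyticAt ℂ g lam₀ ∧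
      ∀ᶠ lam in nhds lam₀, a • U lam + b • W lam = (lam - lam₀) ^ (L + 1) • g lam) :
    ∃ h : ℂ → Matrix (Fin n) (Fin n) ℂ, AnalyticAt ℂ h lam₀ ∧
      ∀ᶠ lam in nhds lam₀,
        a • ((lam - lam₀) ^ J • M₁ lam + D lam * U lam * (D lam)⁻¹)
          + b • ((lam - lam₀) ^ K • M₂ lam + D lam * W lam * (D lam)⁻¹)
        = (lam - lam₀) ^ (L + 1) • h lam := by
  obtain ⟨g, hg, hgev⟩ := hvan
  have hLJ : L + 1 ≤ J := hL
  have hLK : L + 1 ≤ K := hLJ.trans hJK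
  have hpow : ∀ m : ℕ, AnalyticAt ℂ (fun lam : ℂ => (lam - lam₀) ^ m) lam₀ :=
    fun m => ((analyticAt_id).sub analyticAt_const).pow m
  have hDinvA : AnalyticAt ℂ (fun lam => (D lam)⁻¹) lam₀ := analyticAt_matinv hD hDinv
  refine ⟨fun lam => (lam - lam₀) ^ (J - (L + 1)) • (a • M₁ lam)
      + (lam - lam₀) ^ (K - (L + 1)) • (b • M₂ lam)
      + D lam * g lam * (D lam)⁻¹, ?_, ?_⟩
  · exact (((hpow _).smul ((analyticAt_const (v := a)).smul hM₁)).add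
      ((hpow _).smul ((analyticAt_const (v := b)).smul hM₂))).add
      ((analyticAt_matmul (analyticAt_matmul hD hg) hDinvA))
  · filter_upwards [hgev] with lam hlam
    set x := lam - lam₀ with hx
    have e1 : a • (D lam * U lam * (D lam)⁻¹) + b • (D lam * W lam * (D lam)⁻¹)
        = D lam * (a • U lam + b • W lam) * (D lam)⁻¹ := by
      simp [Matrix.mul_add, Matrix.add_mul, mul_smul_comm, smul_mul_assoc]
    have eJ : x ^ J = x ^ (L + 1) * x ^ (J - (L + 1)) := by
      rw [← pow_add, Nat.add_sub_cancel' hLJ]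
    have eK : x ^ K = x ^ (L + 1) * x ^ (K - (L + 1)) := by
      rw [← pow_add, Nat.add_sub_cancel' hLK]
    rw [smul_add, smul_add]
    calc a • (x ^ J • M₁ lam) + a • (D lam * U lam * (D lam)⁻¹)
          + (b • (x ^ K • M₂ lam) + b • (D lam * W lam * (D lam)⁻¹))
        = x ^ J • (a • M₁ lam) + x ^ K • (b • M₂ lam)
          + (a • (D lam * U lam * (D lam)⁻¹) + b • (D lam * W lam * (D lam)⁻¹)) := by
          rw [smul_comm a (x ^ J), smul_comm b (x ^ K)]; abel
      _ = x ^ J • (a • M₁ lam) + x ^ K • (b • M₂ lam)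
          + D lam * (x ^ (L + 1) • g lam) * (D lam)⁻¹ := by rw [e1, hlam]
      _ = x ^ (L + 1) • ((x ^ (J - (L + 1))) • (a • M₁ lam)
          + (x ^ (K - (L + 1))) • (b • M₂ lam) + D lam * g lam * (D lam)⁻¹) := by
          rw [eJ, eK]
          simp [mul_smul, smul_add, Matrix.mul_smul, Matrix.smul_mul]
end

section
/- Let U : ℝ × ℝ → Mₙ(ℂ) be continuously differentiable in (x, λ), and let Φ : ℝ × ℝ → Mₙ(ℂ) be twice continuously differentiable with Φ(x, λ) invertible for all (x, λ) and ∂ₓΦ(x, λ) = U(x, λ)·Φ(x, λ). Define the Sym–Tafel map r(x, λ) := Φ(x, λ)⁻¹ · ∂_λΦ(x, λ). Then ∂ₓ r(x, λ) = Φ(x, λ)⁻¹ · (∂_λU(x, λ)) · Φ(x, λ). -/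
attribute [local instance] Matrix.normedAddCommGroup Matrix.normedSpace

open Matrix

section Aux
variable {n : ℕ}

private lemma st_diff_prod {E : Type*} [NormedAddCommGroup E] [NormedSpace ℝ E] {ι : Type*}
    (s : Finset ι) (f : ι → E → ℂ) (h : ∀ i ∈ s, Differentiable ℝ (f i)) :
    Differentiable ℝ (fun x => ∏ i ∈ s, f i x) := by
  induction s using Finset.cons_induction with
  | empty => simp only [Finset.prod_empty]; exact differentiable_const (1:ℂ)
  | cons a s ha ih =>
    simp only [Finset.prod_cons]
    exact (h a (Finset.mem_cons_self a s)).mul (ih fun i hi => h i (Finset.mem_cons_of_mem hi))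

private lemma st_entry_diff (i j : Fin n) :
    Differentiable ℝ (fun A : Matrix (Fin n) (Fin n) ℂ => A i j) :=
  (differentiable_pi.mp ((differentiable_pi.mp differentiable_id) i)) j

private lemma st_det_diff : Differentiable ℝ (fun A : Matrix (Fin n) (Fin n) ℂ => A.det) := by
  have h : (fun A : Matrix (Fin n) (Fin n) ℂ => A.det)
      = fun A => ∑ σ : Equiv.Perm (Fin n), ((Equiv.Perm.sign σ : ℤ) : ℂ) * ∏ i, A (σ i) i := by
    funext A; rw [Matrix.det_apply']
  rw [h]
  exact Differentiable.fun_sum fun σ _ =>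
    ((st_diff_prod Finset.univ _ (fun i _ => st_entry_diff (σ i) i)).const_mul _)

private lemma st_adj_diff :
    Differentiable ℝ (fun A : Matrix (Fin n) (Fin n) ℂ => A.adjugate) := by
  apply differentiable_pi.mpr; intro i
  apply differentiable_pi.mpr; intro j
  have h : (fun A : Matrix (Fin n) (Fin n) ℂ => A.adjugate i j)
      = fun A => ∑ σ : Equiv.Perm (Fin n), ((Equiv.Perm.sign σ : ℤ) : ℂ)
          * ∏ k, (A.updateRow j (Pi.single i 1)) (σ k) k := by
    funext A; rw [Matrix.adjugate_apply, Matrix.det_apply']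
  rw [h]
  apply Differentiable.fun_sum; intro σ _
  apply Differentiable.const_mul
  apply st_diff_prod
  intro k _
  by_cases hk : σ k = j
  · simp only [Matrix.updateRow_apply, hk, if_pos rfl]
    exact differentiable_const _
  · simp only [Matrix.updateRow_apply, if_neg hk]
    exact st_entry_diff _ _

noncomputable def stMulL (n : ℕ) :
    Matrix (Fin n) (Fin n) ℂ →L[ℝ] Matrix (Fin n) (Fin n) ℂ →L[ℝ] Matrix (Fin n) (Fin n) ℂ :=
  LinearMap.toContinuousLinearMap
    ((LinearMap.toContinuousLinearMap :
        (Matrix (Fin n) (Fin n) ℂ →ₗ[ℝ] Matrix (Fin n) (Fin n) ℂ) ≃ₗ[ℝ] _).toLinearMap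
      ∘ₗ LinearMap.mul ℝ (Matrix (Fin n) (Fin n) ℂ))

private lemma stMulL_apply (A B : Matrix (Fin n) (Fin n) ℂ) : stMulL n A B = A * B := rfl

private lemma st_fderiv_mul {f g : ℝ × ℝ → Matrix (Fin n) (Fin n) ℂ} {p : ℝ × ℝ} (v : ℝ × ℝ)
    (hf : DifferentiableAt ℝ f p) (hg : DifferentiableAt ℝ g p) :
    fderiv ℝ (fun q => f q * g q) p v
      = f p * fderiv ℝ g p v + fderiv ℝ f p v * g p := by
  have h := (stMulL n).hasFDerivAt_of_bilinear hf.hasFDerivAt hg.hasFDerivAt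
  rw [show fderiv ℝ (fun q => f q * g q) p = _ from h.fderiv]
  rfl

private lemma st_diffAt_mul {f g : ℝ × ℝ → Matrix (Fin n) (Fin n) ℂ} {p : ℝ × ℝ}
    (hf : DifferentiableAt ℝ f p) (hg : DifferentiableAt ℝ g p) :
    DifferentiableAt ℝ (fun q => f q * g q) p :=
  ((stMulL n).hasFDerivAt_of_bilinear hf.hasFDerivAt hg.hasFDerivAt).differentiableAt

end Aux

/-- **Tangent vectors of Sym–Tafel soliton surfaces.** If `∂ₓΦ(x,λ) = U(x,λ)·Φ(x,λ)` with
`Φ` invertible-valued, then the Sym–Tafel map `r = Φ⁻¹·∂_λΦ` satisfies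
`∂ₓr = Φ⁻¹·(∂_λU)·Φ`. Here points of `ℝ × ℝ` are `(x, λ)`, `∂ₓ` is the derivative in the
direction `(1,0)` and `∂_λ` in the direction `(0,1)`. -/
theorem sym_tafel_tangent_vector {n : ℕ}
    (U Φ : ℝ × ℝ → Matrix (Fin n) (Fin n) ℂ)
    (hU : ContDiff ℝ 1 U) (hΦ : ContDiff ℝ 2 Φ)
    (hΦinv : ∀ p, IsUnit (Φ p))
    (hlin : ∀ p, fderiv ℝ Φ p (1, 0) = U p * Φ p) :
    ∀ p, fderiv ℝ (fun q => (Φ q)⁻¹ * fderiv ℝ Φ q (0, 1)) p (1, 0)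
      = (Φ p)⁻¹ * fderiv ℝ U p (0, 1) * Φ p := by
  intro p
  have hΦd : Differentiable ℝ Φ := hΦ.differentiable (by norm_num)
  have hUd : Differentiable ℝ U := hU.differentiable one_ne_zero
  have hdetU : ∀ q, IsUnit (Φ q).det := fun q => (Matrix.isUnit_iff_isUnit_det _).mp (hΦinv q)
  have hdet0 : ∀ q, (Φ q).det ≠ 0 := fun q => (hdetU q).ne_zero
  -- differentiability of the inverse map Ψ = Φ⁻¹
  have hΨeq : (fun q => (Φ q)⁻¹) = fun q => ((Φ q).det)⁻¹ • (Φ q).adjugate := by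
    funext q; rw [Matrix.inv_def, Ring.inverse_eq_inv']
  have hΨd : Differentiable ℝ (fun q => (Φ q)⁻¹) := by
    rw [hΨeq]
    exact ((st_det_diff.comp hΦd).inv hdet0).smul (st_adj_diff.comp hΦd)
  -- differentiability of fderiv Φ and of G q = fderiv Φ q (0,1)
  letI : NormedAddCommGroup (ℝ × ℝ →L[ℝ] Matrix (Fin n) (Fin n) ℂ) :=
    ContinuousLinearMap.toNormedAddCommGroup
  letI : NormedSpace ℝ (ℝ × ℝ →L[ℝ] Matrix (Fin n) (Fin n) ℂ) := ContinuousLinearMap.toNormedSpace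
  have hfΦ : ContDiff ℝ 1 (fderiv ℝ Φ) := hΦ.fderiv_right (by norm_num)
  have hfΦd : Differentiable ℝ (fderiv ℝ Φ) := hfΦ.differentiable one_ne_zero
  have hGdiff : ∀ v : ℝ × ℝ, Differentiable ℝ (fun q => fderiv ℝ Φ q v) := fun v =>
    (ContinuousLinearMap.apply ℝ (Matrix (Fin n) (Fin n) ℂ) v).differentiable.comp hfΦd
  have hGfd : ∀ (v w : ℝ × ℝ) (q : ℝ × ℝ),
      fderiv ℝ (fun q => fderiv ℝ Φ q v) q w = fderiv ℝ (fderiv ℝ Φ) q w v := by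
    intro v w q
    have h : HasFDerivAt (fun q => fderiv ℝ Φ q v)
        ((ContinuousLinearMap.apply ℝ (Matrix (Fin n) (Fin n) ℂ) v).comp (fderiv ℝ (fderiv ℝ Φ) q)) q :=
      ((ContinuousLinearMap.apply ℝ (Matrix (Fin n) (Fin n) ℂ) v).hasFDerivAt).comp q (hfΦd q).hasFDerivAt
    rw [show fderiv ℝ (fun q => fderiv ℝ Φ q v) q = _ from h.fderiv]; rfl
  -- symmetry of second derivative
  have hsymm : ∀ (v w : ℝ × ℝ),
      fderiv ℝ (fderiv ℝ Φ) p v w = fderiv ℝ (fderiv ℝ Φ) p w v := by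
    intro v w
    exact (hΦ.contDiffAt.isSymmSndFDerivAt (by norm_num)) v w
  -- mixed derivative: D₁ D₂ Φ = D₂ (UΦ)
  have key2 : fderiv ℝ (fun q => fderiv ℝ Φ q (0, 1)) p (1, 0)
      = U p * fderiv ℝ Φ p (0, 1) + fderiv ℝ U p (0, 1) * Φ p := by
    rw [hGfd (0,1) (1,0) p, hsymm (1,0) (0,1), ← hGfd (1,0) (0,1) p]
    have h : (fun q => fderiv ℝ Φ q (1, 0)) = fun q => U q * Φ q := funext hlin
    rw [h, st_fderiv_mul (0,1) (hUd p) (hΦd p)]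
  -- derivative of Ψ in direction (1,0)
  have hΨΦ : (fun q => (Φ q)⁻¹ * Φ q) = fun _ => (1 : Matrix (Fin n) (Fin n) ℂ) := by
    funext q; exact Matrix.nonsing_inv_mul _ (hdetU q)
  have keyΨ : (Φ p)⁻¹ * fderiv ℝ Φ p (1, 0) + fderiv ℝ (fun q => (Φ q)⁻¹) p (1, 0) * Φ p
      = 0 := by
    rw [← st_fderiv_mul (1,0) (hΨd p) (hΦd p), hΨΦ, fderiv_fun_const]
    rfl
  have keyΨ' : fderiv ℝ (fun q => (Φ q)⁻¹) p (1, 0) = -((Φ p)⁻¹ * U p) := by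
    have h1 : fderiv ℝ (fun q => (Φ q)⁻¹) p (1, 0) * Φ p
        = -((Φ p)⁻¹ * (U p * Φ p)) := by
      rw [← hlin p]
      linear_combination (norm := noncomm_ring) keyΨ
    have h2 := congrArg (· * (Φ p)⁻¹) h1
    simpa [mul_assoc, Matrix.mul_nonsing_inv (Φ p) (hdetU p)] using h2
  -- final computation
  rw [st_fderiv_mul (1,0) (hΨd p) (hGdiff (0,1) p), key2, keyΨ']
  rw [hlin p] at *
  noncomm_ring
end

section
/- Let P ∈ Mₙ(ℂ) satisfy P² = P and P ᴴ = P, and let d := rank P. Then Tr( ((d/n)·I − P)² ) = d − d²/n. Consequently, in the Darboux–Bianchi transformation r̃ = r + (2 Im λ₁ / |λ − λ₁|²)·Φ⁻¹·i((d/n)·I − P)·Φ for su(n) soliton surfaces with Φ unitary, the squared length −2·Tr((r̃ − r)²)·(|λ−λ₁|²/(2 Im λ₁))² = 2(d − d²/n) of the normalized segment, and hence the length of the segment r̃ − r, does not depend on x¹, x². -/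
open Matrix

lemma trace_eq_rank_of_idem {n : ℕ} (P : Matrix (Fin n) (Fin n) ℂ) (hP : P * P = P) :
    Matrix.trace P = (P.rank : ℂ) := by
  have hf : LinearMap.IsProj (LinearMap.range P.mulVecLin) P.mulVecLin := by
    constructor
    · intro x; exact LinearMap.mem_range_self _ x
    · rintro x ⟨y, rfl⟩
      have h2 : P.mulVecLin ∘ₗ P.mulVecLin = P.mulVecLin := by
        rw [← Matrix.mulVecLin_mul, hP]
      exact congrFun (congrArg DFunLike.coe h2) y
  have ht := hf.trace
  rw [LinearMap.trace_eq_matrix_trace ℂ (Pi.basisFun ℂ (Fin n))] at ht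
  rw [Matrix.rank, ← ht]
  congr 1
  rw [LinearMap.toMatrix_eq_toMatrix']
  ext i j
  simp [LinearMap.toMatrix'_apply, Matrix.mulVecLin_apply, Matrix.mulVec, dotProduct, Pi.single_apply]

/-- For a Hermitian projector `P` of rank `d` on `ℂⁿ`,
`Tr(((d/n)·I − P)²) = d − d²/n`; consequently, for any unitary `Φ`, the squared length
`−2·Tr((Φ⁻¹·i((d/n)I − P)·Φ)²) = 2(d − d²/n)` of the normalized segment `r̃ − r` of the
Darboux–Bianchi transformation does not depend on `x¹, x²` (i.e. not on `Φ`). -/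
theorem darboux_bianchi_segment_length {n : ℕ} (hn : 0 < n)
    (P : Matrix (Fin n) (Fin n) ℂ) (hP : P * P = P) (hPh : Pᴴ = P)
    (d : ℕ) (hd : d = P.rank) :
    Matrix.trace ((((d : ℂ) / n) • (1 : Matrix (Fin n) (Fin n) ℂ) - P) *
        (((d : ℂ) / n) • (1 : Matrix (Fin n) (Fin n) ℂ) - P))
      = (d : ℂ) - (d : ℂ) ^ 2 / n ∧
    ∀ Φ : Matrix (Fin n) (Fin n) ℂ, Φᴴ * Φ = 1 →
      -2 * Matrix.trace
          ((Φ⁻¹ * (Complex.I • (((d : ℂ) / n) • (1 : Matrix (Fin n) (Fin n) ℂ) - P)) * Φ) *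
           (Φ⁻¹ * (Complex.I • (((d : ℂ) / n) • (1 : Matrix (Fin n) (Fin n) ℂ) - P)) * Φ))
        = 2 * ((d : ℂ) - (d : ℂ) ^ 2 / n) := by
  have hTr : Matrix.trace P = (d : ℂ) := by rw [hd]; exact trace_eq_rank_of_idem P hP
  set c : ℂ := (d : ℂ) / n with hc
  set M : Matrix (Fin n) (Fin n) ℂ := c • 1 - P with hM
  have hnn : (n : ℂ) ≠ 0 := Nat.cast_ne_zero.mpr hn.ne'
  have hexp : M * M = (c * c) • (1 : Matrix (Fin n) (Fin n) ℂ) - (2 * c) • P + P := by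
    simp only [hM, sub_mul, mul_sub, hP, smul_mul_assoc, mul_smul_comm, one_mul, mul_one,
      smul_smul, two_mul, add_smul]
    module
  have htr1 : Matrix.trace (M * M) = (d : ℂ) - (d : ℂ) ^ 2 / n := by
    rw [hexp, Matrix.trace_add, Matrix.trace_sub, Matrix.trace_smul, Matrix.trace_smul,
      Matrix.trace_one, hTr]
    simp only [Fintype.card_fin, smul_eq_mul, hc]
    field_simp
    ring
  refine ⟨htr1, ?_⟩
  intro Φ hΦ
  have hΦ2 : Φ * Φᴴ = 1 := mul_eq_one_comm.mp hΦ
  have hinv : Φ⁻¹ = Φᴴ := Matrix.inv_eq_left_inv hΦ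
  have key : Matrix.trace ((Φ⁻¹ * (Complex.I • M) * Φ) * (Φ⁻¹ * (Complex.I • M) * Φ))
      = Matrix.trace ((Complex.I • M) * (Complex.I • M)) := by
    rw [hinv]
    rw [show (Φᴴ * (Complex.I • M) * Φ) * (Φᴴ * (Complex.I • M) * Φ)
        = Φᴴ * ((Complex.I • M) * (Φ * Φᴴ) * (Complex.I • M)) * Φ by
      noncomm_ring]
    rw [hΦ2, Matrix.mul_one, Matrix.trace_mul_cycle, ← Matrix.mul_assoc, hΦ2, Matrix.one_mul]
  rw [key]
  have : (Complex.I • M) * (Complex.I • M) = (-1 : ℂ) • (M * M) := by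
    rw [smul_mul_smul_comm, Complex.I_mul_I]
  rw [this, Matrix.trace_smul, htr1]
  simp
  ring
end

section
/- Let φ : ℝ² → ℝ be twice continuously differentiable, and let e₁ = −(i/2)[[0,1],[1,0]], e₂ = −(i/2)[[0,−i],[i,0]], e₃ = −(i/2)[[1,0],[0,−1]] be the standard su(2) basis. For ζ ∈ ℂ, ζ ≠ 0, define U₁(ζ) := −ζ·e₃ − φ,₁·e₂ and U₂(ζ) := ζ⁻¹·(cos φ · e₃ − sin φ · e₁). Then the zero curvature condition ∂₂U₁(ζ) − ∂₁U₂(ζ) + U₁(ζ)U₂(ζ) − U₂(ζ)U₁(ζ) = 0 holds for all ζ ≠ 0 if and only if φ satisfies the sine-Gordon equation φ,₁₂ = sin φ. -/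
attribute [local instance] Matrix.normedAddCommGroup Matrix.normedSpace

noncomputable section
open Matrix

/-- The su(2) basis vector `e₁ = −(i/2)[[0,1],[1,0]]`. -/
def su2e₁ : Matrix (Fin 2) (Fin 2) ℂ := (-(Complex.I / 2)) • !![(0 : ℂ), 1; 1, 0]

/-- The su(2) basis vector `e₂ = −(i/2)[[0,−i],[i,0]]`. -/
def su2e₂ : Matrix (Fin 2) (Fin 2) ℂ :=
  (-(Complex.I / 2)) • !![(0 : ℂ), -Complex.I; Complex.I, 0]

/-- The su(2) basis vector `e₃ = −(i/2)[[1,0],[0,−1]]`. -/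
def su2e₃ : Matrix (Fin 2) (Fin 2) ℂ := (-(Complex.I / 2)) • !![(1 : ℂ), 0; 0, -1]

/-- `φ,₁ = ∂φ/∂x¹`. -/
def pd1 (φ : ℝ × ℝ → ℝ) (x : ℝ × ℝ) : ℝ := fderiv ℝ φ x (1, 0)

/-- `φ,₁₂ = ∂²φ/∂x²∂x¹`. -/
def pd12 (φ : ℝ × ℝ → ℝ) (x : ℝ × ℝ) : ℝ := fderiv ℝ (pd1 φ) x (0, 1)

/-- `U₁(ζ) = −ζ·e₃ − φ,₁·e₂`. -/
def sgU₁ (φ : ℝ × ℝ → ℝ) (ζ : ℂ) (x : ℝ × ℝ) : Matrix (Fin 2) (Fin 2) ℂ :=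
  -(ζ • su2e₃) - (pd1 φ x : ℂ) • su2e₂

/-- `U₂(ζ) = ζ⁻¹·(cos φ·e₃ − sin φ·e₁)`. -/
def sgU₂ (φ : ℝ × ℝ → ℝ) (ζ : ℂ) (x : ℝ × ℝ) : Matrix (Fin 2) (Fin 2) ℂ :=
  ζ⁻¹ • ((Real.cos (φ x) : ℂ) • su2e₃ - (Real.sin (φ x) : ℂ) • su2e₁)

lemma pd1_contDiff (φ : ℝ × ℝ → ℝ) (hφ : ContDiff ℝ 2 φ) : ContDiff ℝ 1 (pd1 φ) := by
  have h := hφ.fderiv_right (m := 1) (by norm_num)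
  exact h.clm_apply contDiff_const

lemma fderiv_sgU₁ (φ : ℝ × ℝ → ℝ) (hφ : ContDiff ℝ 2 φ) (ζ : ℂ) (x : ℝ × ℝ) :
    fderiv ℝ (sgU₁ φ ζ) x (0, 1) = -((pd12 φ x : ℂ) • su2e₂) := by
  have hd : DifferentiableAt ℝ (pd1 φ) x :=
    ((pd1_contDiff φ hφ).differentiable (by norm_num)) x
  have hc : HasFDerivAt (fun y => ((pd1 φ y : ℝ) : ℂ))
      (Complex.ofRealCLM.comp (fderiv ℝ (pd1 φ) x)) x :=
    Complex.ofRealCLM.hasFDerivAt.comp x hd.hasFDerivAt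
  have h : HasFDerivAt (sgU₁ φ ζ)
      ((0 : ℝ × ℝ →L[ℝ] Matrix (Fin 2) (Fin 2) ℂ) -
        (Complex.ofRealCLM.comp (fderiv ℝ (pd1 φ) x)).smulRight su2e₂) x :=
    (hasFDerivAt_const (-(ζ • su2e₃)) x).sub (hc.smul_const su2e₂)
  rw [h.fderiv]
  simp [pd12]

lemma fderiv_sgU₂ (φ : ℝ × ℝ → ℝ) (hφ : ContDiff ℝ 2 φ) (ζ : ℂ) (x : ℝ × ℝ) :
    fderiv ℝ (sgU₂ φ ζ) x (1, 0) =
      ζ⁻¹ • (((-(Real.sin (φ x) * pd1 φ x) : ℝ) : ℂ) • su2e₃ -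
        ((Real.cos (φ x) * pd1 φ x : ℝ) : ℂ) • su2e₁) := by
  have hd : HasFDerivAt φ (fderiv ℝ φ x) x :=
    ((hφ.differentiable (by norm_num)) x).hasFDerivAt
  have hcos : HasFDerivAt (fun y => ((Real.cos (φ y) : ℝ) : ℂ))
      (Complex.ofRealCLM.comp ((-Real.sin (φ x)) • fderiv ℝ φ x)) x :=
    Complex.ofRealCLM.hasFDerivAt.comp x hd.cos
  have hsin : HasFDerivAt (fun y => ((Real.sin (φ y) : ℝ) : ℂ))
      (Complex.ofRealCLM.comp ((Real.cos (φ x)) • fderiv ℝ φ x)) x :=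
    Complex.ofRealCLM.hasFDerivAt.comp x hd.sin
  have h : HasFDerivAt (sgU₂ φ ζ)
      (ζ⁻¹ • ((Complex.ofRealCLM.comp ((-Real.sin (φ x)) • fderiv ℝ φ x)).smulRight su2e₃ -
        (Complex.ofRealCLM.comp ((Real.cos (φ x)) • fderiv ℝ φ x)).smulRight su2e₁)) x :=
    ((hcos.smul_const su2e₃).sub (hsin.smul_const su2e₁)).const_smul ζ⁻¹
  rw [h.fderiv]
  simp [pd1, smul_sub]

set_option maxHeartbeats 1000000 in
lemma zc_matrix (p q s c : ℂ) (ζ : ℂ) (hζ : ζ ≠ 0) :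
    -(q • su2e₂) - ζ⁻¹ • ((-(s * p)) • su2e₃ - (c * p) • su2e₁)
      + ((-(ζ • su2e₃) - p • su2e₂) * (ζ⁻¹ • (c • su2e₃ - s • su2e₁))
        - (ζ⁻¹ • (c • su2e₃ - s • su2e₁)) * (-(ζ • su2e₃) - p • su2e₂))
      = (s - q) • su2e₂ := by
  have hc : ζ * ζ⁻¹ = 1 := mul_inv_cancel₀ hζ
  unfold su2e₁ su2e₂ su2e₃
  ext i j
  fin_cases i <;> fin_cases j <;>
    · simp [Matrix.mul_apply, Fin.sum_univ_two]
      ring_nf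
      first
      | linear_combination (-(1/2)*ζ⁻¹*s*p*Complex.I) * Complex.I_sq
      | linear_combination ((1/2)*ζ⁻¹*s*p*Complex.I) * Complex.I_sq
      | linear_combination (-(1/2)*Complex.I*ζ⁻¹*c*p) * Complex.I_sq
          + ((1/2)*Complex.I^2*s) * hc
      | linear_combination (-(1/2)*Complex.I*ζ⁻¹*c*p) * Complex.I_sq
          + (-(1/2)*Complex.I^2*s) * hc

/-- The zero curvature condition for the pseudospherical-surface linear problem holds for
all `ζ ≠ 0` iff `φ` satisfies the sine-Gordon equation `φ,₁₂ = sin φ`. -/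
theorem sine_gordon_zero_curvature (φ : ℝ × ℝ → ℝ) (hφ : ContDiff ℝ 2 φ) :
    (∀ ζ : ℂ, ζ ≠ 0 → ∀ x : ℝ × ℝ,
        fderiv ℝ (sgU₁ φ ζ) x (0, 1) - fderiv ℝ (sgU₂ φ ζ) x (1, 0)
          + (sgU₁ φ ζ x * sgU₂ φ ζ x - sgU₂ φ ζ x * sgU₁ φ ζ x) = 0)
      ↔ ∀ x : ℝ × ℝ, pd12 φ x = Real.sin (φ x) := by
  have key : ∀ ζ : ℂ, ζ ≠ 0 → ∀ x : ℝ × ℝ,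
      fderiv ℝ (sgU₁ φ ζ) x (0, 1) - fderiv ℝ (sgU₂ φ ζ) x (1, 0)
        + (sgU₁ φ ζ x * sgU₂ φ ζ x - sgU₂ φ ζ x * sgU₁ φ ζ x)
      = ((Real.sin (φ x) : ℂ) - (pd12 φ x : ℂ)) • su2e₂ := by
    intro ζ hζ x
    rw [fderiv_sgU₁ φ hφ ζ x, fderiv_sgU₂ φ hφ ζ x]
    have := zc_matrix (pd1 φ x : ℂ) (pd12 φ x : ℂ) (Real.sin (φ x) : ℂ)
      (Real.cos (φ x) : ℂ) ζ hζ
    simp only [sgU₁, sgU₂]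
    push_cast
    convert this using 4 <;> push_cast <;> ring
  constructor
  · intro h x
    have h1 := (key 1 one_ne_zero x).symm.trans (h 1 one_ne_zero x)
    have h2 : ((Real.sin (φ x) : ℂ) - (pd12 φ x : ℂ)) * su2e₂ 0 1 = 0 := by
      have h2' := congrFun (congrFun h1 0) 1
      simpa using h2'
    have he : su2e₂ 0 1 = -(1 / 2 : ℂ) := by
      simp [su2e₂]
      linear_combination (1/2 : ℂ) * Complex.I_sq
    rw [he] at h2
    have h3 : ((Real.sin (φ x) : ℂ) - (pd12 φ x : ℂ)) = 0 := by
      rcases mul_eq_zero.mp h2 with h | h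
      · exact h
      · exact absurd h (by norm_num)
    have h4 : Real.sin (φ x) - pd12 φ x = 0 := by exact_mod_cast h3
    linarith
  · intro h ζ hζ x
    rw [key ζ hζ x, h x]
    simp
end
end

section
/- Let λ ∈ ℝ and let λ₁, λ₂ ∈ ℂ with Im λ₁ ≠ 0, Im λ₂ ≠ 0, λ ≠ λ₁, λ ≠ λ₂, and λ₁ ≠ conj(λ₂). Define d₁ := Im λ₁ / |λ − λ₁|², d₂ := Im λ₂ / |λ − λ₂|², and E₁₂ := (λ₁ − λ₂)(λ − conj λ₂) / ((λ₁ − conj λ₂)(λ − λ₂)), E₂₁ := (λ₂ − λ₁)(λ − conj λ₁) / ((λ₂ − conj λ₁)(λ − λ₁)). Then d₁·(conj(E₁₂) − 1) = d₂·(E₂₁ − 1). -/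
/-- Purely algebraic form of the two-soliton constraint, with `m, n` standing for
the conjugates of `λ₁, λ₂` and `z` for the (real) spectral parameter. -/
theorem aux_two_soliton_constraint (z a b m n : ℂ) (h1 : z - a ≠ 0) (h2 : z - b ≠ 0)
    (h3 : z - m ≠ 0) (h4 : z - n ≠ 0) (h6 : m - b ≠ 0) :
    (a - m) / (2 * Complex.I) / ((z - a) * (z - m)) *
      ((m - n) * (z - b) / ((m - b) * (z - n)) - 1)
    = (b - n) / (2 * Complex.I) / ((z - b) * (z - n)) *
      ((b - a) * (z - m) / ((b - m) * (z - a)) - 1) := by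
  have h6' : b - m ≠ 0 := sub_ne_zero.mpr (Ne.symm (sub_ne_zero.mp h6))
  have hI : (2 : ℂ) * Complex.I ≠ 0 := by simp [Complex.I_ne_zero]
  field_simp
  ring

/-- The constraint `d₁(e^{Δ−iδ₁} − 1) = d₂(e^{Δ+iδ₂} − 1)` relating the interaction
parameters of two-soliton su(2)-AKNS surfaces: with `dₖ = Im λₖ/|λ−λₖ|²`,
`E₁₂ = (λ₁−λ₂)(λ−λ̄₂)/((λ₁−λ̄₂)(λ−λ₂))`, `E₂₁ = (λ₂−λ₁)(λ−λ̄₁)/((λ₂−λ̄₁)(λ−λ₁))`,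
one has `d₁·(conj E₁₂ − 1) = d₂·(E₂₁ − 1)`. -/
theorem two_soliton_parameter_constraint
    (lam : ℝ) (lam₁ lam₂ : ℂ)
    (h₁ : lam₁.im ≠ 0) (h₂ : lam₂.im ≠ 0)
    (hne₁ : (lam : ℂ) ≠ lam₁) (hne₂ : (lam : ℂ) ≠ lam₂)
    (hne₁₂ : lam₁ ≠ (starRingEnd ℂ) lam₂) :
    ((lam₁.im / ‖(lam : ℂ) - lam₁‖ ^ 2 : ℝ) : ℂ) *
        ((starRingEnd ℂ) ((lam₁ - lam₂) * ((lam : ℂ) - (starRingEnd ℂ) lam₂) /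
          ((lam₁ - (starRingEnd ℂ) lam₂) * ((lam : ℂ) - lam₂))) - 1)
      = ((lam₂.im / ‖(lam : ℂ) - lam₂‖ ^ 2 : ℝ) : ℂ) *
        ((lam₂ - lam₁) * ((lam : ℂ) - (starRingEnd ℂ) lam₁) /
          ((lam₂ - (starRingEnd ℂ) lam₁) * ((lam : ℂ) - lam₁)) - 1) := by
  have hz : (starRingEnd ℂ) (lam : ℂ) = (lam : ℂ) := Complex.conj_ofReal lam
  have hsub1 : ((lam : ℂ)) - lam₁ ≠ 0 := sub_ne_zero.mpr hne₁
  have hsub2 : ((lam : ℂ)) - lam₂ ≠ 0 := sub_ne_zero.mpr hne₂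
  have hc1 : ((lam : ℂ)) - (starRingEnd ℂ) lam₁ ≠ 0 := by
    rw [sub_ne_zero]
    intro h
    apply h₁
    have := congrArg Complex.im h
    simp [Complex.conj_im] at this
    linarith
  have hc2 : ((lam : ℂ)) - (starRingEnd ℂ) lam₂ ≠ 0 := by
    rw [sub_ne_zero]
    intro h
    apply h₂
    have := congrArg Complex.im h
    simp [Complex.conj_im] at this
    linarith
  have h6 : (starRingEnd ℂ) lam₁ - lam₂ ≠ 0 := by
    rw [sub_ne_zero]
    intro h
    apply hne₁₂
    rw [← h, Complex.conj_conj]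
  have e1 : ((‖(lam : ℂ) - lam₁‖ ^ 2 : ℝ) : ℂ)
      = ((lam : ℂ) - lam₁) * ((lam : ℂ) - (starRingEnd ℂ) lam₁) := by
    rw [← Complex.normSq_eq_norm_sq, ← Complex.mul_conj, map_sub, hz]
  have e2 : ((‖(lam : ℂ) - lam₂‖ ^ 2 : ℝ) : ℂ)
      = ((lam : ℂ) - lam₂) * ((lam : ℂ) - (starRingEnd ℂ) lam₂) := by
    rw [← Complex.normSq_eq_norm_sq, ← Complex.mul_conj, map_sub, hz]
  have i1 : ((lam₁.im : ℝ) : ℂ) = (lam₁ - (starRingEnd ℂ) lam₁) / (2 * Complex.I) := by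
    rw [Complex.sub_conj]
    field_simp
    push_cast
    ring
  have i2 : ((lam₂.im : ℝ) : ℂ) = (lam₂ - (starRingEnd ℂ) lam₂) / (2 * Complex.I) := by
    rw [Complex.sub_conj]
    field_simp
    push_cast
    ring
  push_cast
  push_cast at e1 e2
  rw [e1, e2, i1, i2]
  simp only [map_div₀, map_mul, map_sub, Complex.conj_conj, hz]
  exact aux_two_soliton_constraint (lam : ℂ) lam₁ lam₂
    ((starRingEnd ℂ) lam₁) ((starRingEnd ℂ) lam₂) hsub1 hsub2 hc1 hc2 h6
end

section
/- Let α ∈ ℝ with α ≠ 0, and consider the dispersion function ω(μ) := −2αμ² (the Localized Induction Equation case). Let λ ∈ ℝ and λₖ = aₖ + i bₖ ∈ ℂ with bₖ ≠ 0. Define the group velocity v^g := Im ω(λₖ)/bₖ − ω′(λ), the rotation rate Ω := 2(ω(λ) − Re ω(λₖ)) − 2(λ − aₖ)·Im ω(λₖ)/bₖ, and c := Re(1/(conj(λₖ) − λ)). Then Ω = −4α·|λ − λₖ|² ≠ 0 and c = v^g / Ω; i.e., the parameter c equals the distance travelled by the soliton's wave envelope during one full circle of the wave maximum. -/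
/-- For the Localized Induction Equation dispersion `ω(μ) = −2αμ²`, the rotation rate is
`Ω = −4α|λ−λₖ|² ≠ 0` and the parameter `c = Re(1/(λ̄ₖ−λ))` equals `v^g/Ω`, the distance
travelled by the wave envelope during one full circle of the wave maximum. -/
theorem lie_envelope_distance_parameter
    (α lam a b : ℝ) (hα : α ≠ 0) (hb : b ≠ 0)
    (ω : ℂ → ℂ) (hω : ω = fun μ : ℂ => -2 * (α : ℂ) * μ ^ 2)
    (lamk : ℂ) (hlamk : lamk = (a : ℂ) + (b : ℂ) * Complex.I)
    (vg Om c : ℂ)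
    (hvg : vg = (((ω lamk).im / b : ℝ) : ℂ) - deriv ω (lam : ℂ))
    (hOm : Om = 2 * (ω (lam : ℂ) - ((ω lamk).re : ℂ))
        - 2 * ((lam : ℂ) - (a : ℂ)) * (((ω lamk).im / b : ℝ) : ℂ))
    (hc : c = (((1 / ((starRingEnd ℂ) lamk - (lam : ℂ))).re : ℝ) : ℂ)) :
    Om = -4 * (α : ℂ) * ((‖(lam : ℂ) - lamk‖ : ℝ) : ℂ) ^ 2 ∧ Om ≠ 0 ∧ c = vg / Om := by
  subst hω hlamk
  have hderiv : deriv (fun μ : ℂ => -2 * (α:ℂ) * μ ^ 2) (lam : ℂ) = -4*(α:ℂ)*(lam:ℂ) := by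
    have h : HasDerivAt (fun μ : ℂ => -2 * (α:ℂ) * μ ^ 2)
        (-2*(α:ℂ) * (2 * (lam:ℂ)^1)) (lam:ℂ) := (hasDerivAt_pow 2 (lam:ℂ)).const_mul _
    rw [h.deriv]; ring
  have him : ((-2 * (α:ℂ) * ((a:ℂ)+(b:ℂ)*Complex.I) ^ 2).im) = -4*α*a*b := by
    simp [pow_two, Complex.mul_im, Complex.mul_re]; try ring
  have hre : ((-2 * (α:ℂ) * ((a:ℂ)+(b:ℂ)*Complex.I) ^ 2).re) = -2*α*(a^2-b^2) := by
    simp [pow_two, Complex.mul_im, Complex.mul_re]; try ring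
  simp only at hvg hOm
  rw [him] at hvg hOm
  rw [hre] at hOm
  rw [hderiv] at hvg
  have hdiv : (-4*α*a*b) / b = -4*α*a := by field_simp
  rw [hdiv] at hvg hOm
  have habs : ((‖(lam : ℂ) - ((a:ℂ)+(b:ℂ)*Complex.I)‖ : ℝ) : ℂ) ^ 2
      = ((lam-a)^2 + b^2 : ℝ) := by
    have hr : (‖(lam : ℂ) - ((a:ℂ)+(b:ℂ)*Complex.I)‖)^2 = (lam-a)^2 + b^2 := by
      rw [Complex.sq_norm, Complex.normSq_apply]
      simp [Complex.sub_re, Complex.sub_im]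
      ring
    exact_mod_cast hr
  have hD : ((lam-a)^2 + b^2 : ℝ) ≠ 0 := by positivity
  have hOm' : Om = -4 * (α:ℂ) * (((lam-a)^2 + b^2 : ℝ) : ℂ) := by
    rw [hOm]; push_cast; ring
  have hOmne : Om ≠ 0 := by
    rw [hOm']
    exact mul_ne_zero (mul_ne_zero (by norm_num) (Complex.ofReal_ne_zero.2 hα))
      (Complex.ofReal_ne_zero.2 hD)
  refine ⟨by rw [hOm', habs], hOmne, ?_⟩
  have hcval : c = ((a - lam) / ((lam-a)^2 + b^2) : ℝ) := by
    rw [hc]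
    norm_num [Complex.div_re, Complex.normSq_apply, Complex.sub_re, Complex.sub_im]
    congr 1
    ring
  have hDc : ((lam:ℂ)-(a:ℂ))^2+(b:ℂ)^2 ≠ 0 := by
    have h2 := Complex.ofReal_ne_zero.2 hD
    push_cast at h2
    exact h2
  rw [eq_div_iff hOmne, hcval, hOm', hvg]
  push_cast
  field_simp [hDc]
  ring
end
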